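/- arXiv:1407.8334 — 2 statements merged into one kernel-verified Lean document; each statement's English description precedes it below -/
import Mathlib

section
/- Let 0 < θ ≤ 1/2. For every n, every positive semidefinite n×n complex matrix x, and every n×n complex matrix b with operator norm ‖b‖_∞ ≤ 1, one has trace((bᴴ x^{2θ} b)^{1/(2θ)}) ≤ trace(bᴴ x b). -/
open Matrix
open scoped ComplexOrder

/-- The absolute value `|A| = (Aᴴ A)^{1/2}` of a complex matrix. -/
noncomputable def matAbs {n : ℕ} (A : Matrix (Fin n) (Fin n) ℂ) : Matrix (Fin n) (Fin n) ℂ :=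
  (Matrix.posSemidef_conjTranspose_mul_self A).1.eigenvectorUnitary.1 *
    diagonal ((↑) ∘ (√·) ∘ (Matrix.posSemidef_conjTranspose_mul_self A).1.eigenvalues) *
    (star (Matrix.posSemidef_conjTranspose_mul_self A).1.eigenvectorUnitary : Matrix (Fin n) (Fin n) ℂ)

/-- Real power of a (Hermitian) matrix via the continuous functional calculus:
for positive semidefinite matrices this applies `t ↦ t ^ r` to the eigenvalues. -/
noncomputable def matPow {n : ℕ} (A : Matrix (Fin n) (Fin n) ℂ) (r : ℝ) :
    Matrix (Fin n) (Fin n) ℂ :=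
  cfc (fun t : ℝ => t ^ r) A

/-- The Schatten `r`-(quasi)norm `(trace |A|^r)^{1/r}`. -/
noncomputable def schattenNorm {n : ℕ} (r : ℝ) (A : Matrix (Fin n) (Fin n) ℂ) : ℝ :=
  ((matPow (matAbs A) r).trace).re ^ (1 / r)

/-- The operator norm of a matrix acting on `ℂⁿ`. -/
noncomputable def opNorm {n : ℕ} (A : Matrix (Fin n) (Fin n) ℂ) : ℝ :=
  ‖Matrix.toEuclideanCLM (𝕜 := ℂ) A‖


open Finset in
lemma jensen_aux (p : ℝ) (hp : 1 ≤ p) {m : ℕ} (w s : Fin m → ℝ)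
    (hw : ∀ j, 0 ≤ w j) (hs : ∀ j, 0 ≤ s j) (hw1 : ∑ j, w j ≤ 1) :
    (∑ j, w j * s j) ^ p ≤ ∑ j, w j * (s j) ^ p := by
  set W := ∑ j, w j with hW
  have hW0 : 0 ≤ W := Finset.sum_nonneg fun j _ => hw j
  rcases eq_or_lt_of_le hW0 with h0 | h0
  · have hz : ∀ j, w j = 0 := by
      intro j
      have := Finset.sum_eq_zero_iff_of_nonneg (fun j _ => hw j) |>.mp h0.symm
      exact this j (Finset.mem_univ j)
    simp only [hz, zero_mul, Finset.sum_const_zero]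
    rw [Real.zero_rpow (by positivity)]
  · have key := Real.rpow_arith_mean_le_arith_mean_rpow Finset.univ
      (fun j => w j / W) s (fun j _ => div_nonneg (hw j) hW0)
      (by rw [← Finset.sum_div]; field_simp; exact hW.symm) (fun j _ => hs j) hp
    have hsum : ∑ j, w j / W * s j = (∑ j, w j * s j) / W := by
      rw [Finset.sum_div]; congr 1; ext j; ring
    rw [hsum, Real.div_rpow (Finset.sum_nonneg fun j _ => mul_nonneg (hw j) (hs j)) hW0] at key
    have hS0 : 0 ≤ ∑ j, w j * s j := Finset.sum_nonneg fun j _ => mul_nonneg (hw j) (hs j)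
    have h2 : (∑ j, w j * s j) ^ p ≤ W ^ p * ∑ j, w j / W * s j ^ p := by
      rw [div_le_iff₀ (by positivity)] at key
      calc (∑ j, w j * s j) ^ p ≤ (∑ j, w j / W * s j ^ p) * W ^ p := key
        _ = W ^ p * ∑ j, w j / W * s j ^ p := by ring
    refine h2.trans ?_
    have : W ^ p * ∑ j, w j / W * s j ^ p = W ^ (p - 1) * ∑ j, w j * s j ^ p := by
      rw [Finset.mul_sum, Finset.mul_sum]
      congr 1; ext j
      rw [div_eq_mul_inv]
      have : W ^ p = W ^ (p - 1) * W := by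
        rw [← Real.rpow_add_one h0.ne']; norm_num
      rw [this]; field_simp
    rw [this]
    have hWp : W ^ (p - 1) ≤ 1 :=
      Real.rpow_le_one hW0 hw1 (by linarith)
    calc W ^ (p-1) * ∑ j, w j * s j ^ p ≤ 1 * ∑ j, w j * s j ^ p := by
          apply mul_le_mul_of_nonneg_right hWp
          exact Finset.sum_nonneg fun j _ => mul_nonneg (hw j) (Real.rpow_nonneg (hs j) p)
      _ = _ := one_mul _


-- trace of IsHermitian.cfc
lemma trace_hcfc {n : ℕ} {A : Matrix (Fin n) (Fin n) ℂ} (hA : A.IsHermitian) (f : ℝ → ℝ) :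
    (hA.cfc f).trace = ∑ i, (f (hA.eigenvalues i) : ℂ) := by
  have hU : (star (hA.eigenvectorUnitary : Matrix (Fin n) (Fin n) ℂ)) *
      (hA.eigenvectorUnitary : Matrix (Fin n) (Fin n) ℂ) = 1 :=
    Unitary.star_mul_self_of_mem (SetLike.coe_mem _)
  rw [Matrix.IsHermitian.cfc, Unitary.conjStarAlgAut_apply, Matrix.trace_mul_cycle, hU, Matrix.one_mul,
    Matrix.trace_diagonal]
  rfl

-- operator norm bound on vectors
lemma mulVec_normSq_le {n : ℕ} (b : Matrix (Fin n) (Fin n) ℂ)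
    (hb : ‖Matrix.toEuclideanCLM (𝕜 := ℂ) b‖ ≤ 1) (u : Fin n → ℂ) :
    ∑ j, Complex.normSq ((b *ᵥ u) j) ≤ ∑ j, Complex.normSq (u j) := by
  set v : EuclideanSpace ℂ (Fin n) := (WithLp.equiv 2 _).symm u
  have h1 : Matrix.toEuclideanCLM (𝕜 := ℂ) b v = (WithLp.equiv 2 _).symm (b *ᵥ u) := by
    rfl
  have h2 : ‖Matrix.toEuclideanCLM (𝕜 := ℂ) b v‖ ≤ ‖v‖ := by
    calc ‖Matrix.toEuclideanCLM (𝕜 := ℂ) b v‖ ≤ ‖Matrix.toEuclideanCLM (𝕜 := ℂ) b‖ * ‖v‖ :=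
          (Matrix.toEuclideanCLM (𝕜 := ℂ) b).le_opNorm v
      _ ≤ 1 * ‖v‖ := by
          apply mul_le_mul_of_nonneg_right hb (norm_nonneg _)
      _ = ‖v‖ := one_mul _
  rw [h1] at h2
  have hnorm : ∀ w : Fin n → ℂ,
      ‖((WithLp.equiv 2 (Fin n → ℂ)).symm w : EuclideanSpace ℂ (Fin n))‖ ^ 2
        = ∑ j, Complex.normSq (w j) := by
    intro w
    rw [EuclideanSpace.norm_eq]
    rw [Real.sq_sqrt (by positivity)]
    congr 1; ext j
    exact Complex.sq_norm _
  have := pow_le_pow_left₀ (norm_nonneg _) h2 2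
  rwa [hnorm, hnorm] at this


-- dotProduct and normSq
lemma dot_normSq {n : ℕ} (w : Fin n → ℂ) :
    (star w ⬝ᵥ w) = ((∑ k, Complex.normSq (w k) : ℝ) : ℂ) := by
  simp only [dotProduct, Pi.star_apply, Complex.ofReal_sum]
  congr 1; ext k
  rw [Complex.star_def, ← Complex.normSq_eq_conj_mul_self]

lemma unitary_mulVec_normSq {n : ℕ} {W : Matrix (Fin n) (Fin n) ℂ} (hW : Wᴴ * W = 1)
    (w : Fin n → ℂ) :
    ∑ k, Complex.normSq ((W *ᵥ w) k) = ∑ k, Complex.normSq (w k) := by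
  have h : star (W *ᵥ w) ⬝ᵥ (W *ᵥ w) = star w ⬝ᵥ w := by
    rw [star_mulVec, ← dotProduct_mulVec, mulVec_mulVec, hW, one_mulVec]
  rw [dot_normSq, dot_normSq] at h
  exact_mod_cast h

theorem jensen_trace_inequality (θ : ℝ) (hθ0 : 0 < θ) (hθ1 : θ ≤ 1 / 2)
    (n : ℕ) (x b : Matrix (Fin n) (Fin n) ℂ) (hx : x.PosSemidef) (hb : opNorm b ≤ 1) :
    ((matPow (bᴴ * matPow x (2 * θ) * b) (1 / (2 * θ))).trace).re ≤
      ((bᴴ * x * b).trace).re := by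
  have h2θ : 0 < 2 * θ := by linarith
  have h2θ1 : 2 * θ ≤ 1 := by linarith
  set p : ℝ := 1 / (2 * θ) with hpdef
  have hp : 1 ≤ p := by
    rw [hpdef, le_div_iff₀ h2θ]; linarith
  have hxH : x.IsHermitian := hx.1
  set ξ : Fin n → ℝ := hxH.eigenvalues with hξdef
  have hξ : ∀ j, 0 ≤ ξ j := fun j => hx.eigenvalues_nonneg j
  set V : Matrix (Fin n) (Fin n) ℂ := (hxH.eigenvectorUnitary : Matrix (Fin n) (Fin n) ℂ)
    with hVdef
  have hVV : Vᴴ * V = 1 := by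
    rw [← Matrix.star_eq_conjTranspose]
    exact Unitary.star_mul_self_of_mem (SetLike.coe_mem _)
  have hVV' : V * Vᴴ = 1 := by
    rw [← Matrix.star_eq_conjTranspose]
    exact Unitary.mul_star_self_of_mem (SetLike.coe_mem _)
  set Dy : Matrix (Fin n) (Fin n) ℂ :=
    diagonal (fun j => ((ξ j ^ (2 * θ) : ℝ) : ℂ)) with hDydef
  set Dx : Matrix (Fin n) (Fin n) ℂ := diagonal (fun j => ((ξ j : ℝ) : ℂ)) with hDxdef
  -- y = matPow x (2θ) decomposed
  have hy_eq : matPow x (2 * θ) = V * Dy * star V := by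
    rw [matPow, hxH.cfc_eq, Matrix.IsHermitian.cfc]
    rfl
  have hx_eq : x = V * Dx * star V := by
    have := hxH.spectral_theorem
    rw [Unitary.conjStarAlgAut_apply] at this
    exact this
  -- y is PSD
  have hy : (matPow x (2 * θ)).PosSemidef := by
    rw [hy_eq, Matrix.star_eq_conjTranspose]
    refine Matrix.PosSemidef.mul_mul_conjTranspose_same ?_ V
    rw [hDydef, Matrix.posSemidef_diagonal_iff]
    intro i
    rw [Complex.zero_le_real]
    exact Real.rpow_nonneg (hξ i) _
  set M : Matrix (Fin n) (Fin n) ℂ := bᴴ * matPow x (2 * θ) * b with hMdef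
  have hM : M.PosSemidef := hy.conjTranspose_mul_mul_same b
  have hMH : M.IsHermitian := hM.1
  set μ : Fin n → ℝ := hMH.eigenvalues with hμdef
  have hμ : ∀ i, 0 ≤ μ i := fun i => hM.eigenvalues_nonneg i
  set U : Matrix (Fin n) (Fin n) ℂ := (hMH.eigenvectorUnitary : Matrix (Fin n) (Fin n) ℂ)
    with hUdef
  have hUU : Uᴴ * U = 1 := by
    rw [← Matrix.star_eq_conjTranspose]
    exact Unitary.star_mul_self_of_mem (SetLike.coe_mem _)
  have hUU' : U * Uᴴ = 1 := by
    rw [← Matrix.star_eq_conjTranspose]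
    exact Unitary.mul_star_self_of_mem (SetLike.coe_mem _)
  set C : Matrix (Fin n) (Fin n) ℂ := Vᴴ * b * U with hCdef
  -- LHS as sum of μ i ^ p
  have hLHS : ((matPow M p).trace).re = ∑ i, (μ i) ^ p := by
    rw [matPow, hMH.cfc_eq, trace_hcfc, Complex.re_sum]
    simp [hμdef]
  -- diagonal identity
  have hdiag : diagonal (fun i => ((μ i : ℝ) : ℂ)) = Cᴴ * Dy * C := by
    have h1 : Uᴴ * M * U = diagonal (fun i => ((μ i : ℝ) : ℂ)) := by
      have hspec := hMH.spectral_theorem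
      have : (fun i => ((μ i : ℝ) : ℂ)) = RCLike.ofReal ∘ hMH.eigenvalues := rfl
      rw [this]
      conv_lhs => rw [hspec]
      rw [← Matrix.star_eq_conjTranspose U]
      calc star U * ((U * diagonal (RCLike.ofReal ∘ hMH.eigenvalues) * star U)) * U
          = (star U * U) * diagonal (RCLike.ofReal ∘ hMH.eigenvalues) * (star U * U) := by
            simp only [Matrix.mul_assoc]
        _ = diagonal (RCLike.ofReal ∘ hMH.eigenvalues) := by
            rw [Matrix.star_eq_conjTranspose, hUU, Matrix.one_mul, Matrix.mul_one]
    have h2 : Uᴴ * M * U = Cᴴ * Dy * C := by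
      rw [hMdef, hy_eq, hCdef]
      simp only [Matrix.conjTranspose_mul, Matrix.conjTranspose_conjTranspose,
        Matrix.star_eq_conjTranspose, Matrix.mul_assoc]
    rw [← h1, h2]
  -- entrywise: μ i = ∑ k, ξ k ^ (2θ) * normSq (C k i)
  have hentry : ∀ (d : Fin n → ℝ) (i : Fin n),
      ((Cᴴ * diagonal (fun j => ((d j : ℝ) : ℂ)) * C) i i).re
        = ∑ k, d k * Complex.normSq (C k i) := by
    intro d i
    rw [Matrix.mul_assoc, Matrix.mul_apply]
    rw [Complex.re_sum]
    congr 1; ext k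
    rw [Matrix.diagonal_mul, Matrix.conjTranspose_apply]
    have hns : ((Complex.normSq (C k i) : ℝ) : ℂ) = (starRingEnd ℂ) (C k i) * C k i :=
      Complex.normSq_eq_conj_mul_self
    have : star (C k i) * (((d k : ℝ) : ℂ) * C k i)
        = ((d k : ℝ) : ℂ) * ((Complex.normSq (C k i) : ℝ) : ℂ) := by
      rw [hns, Complex.star_def]; ring
    rw [this]
    simp [Complex.ofReal_mul]
  have hμ_eq : ∀ i, μ i = ∑ k, (ξ k) ^ (2 * θ) * Complex.normSq (C k i) := by
    intro i
    have := congrArg (fun A => (A i i).re) hdiag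
    rw [show μ i = ((Cᴴ * Dy * C) i i).re by simpa [Matrix.diagonal_apply_eq] using this]
    exact hentry (fun j => ξ j ^ (2 * θ)) i
  -- RHS
  have hRHS : ((bᴴ * x * b).trace).re = ∑ i, ∑ k, ξ k * Complex.normSq (C k i) := by
    have h2x : Uᴴ * (bᴴ * x * b) * U = Cᴴ * Dx * C := by
      rw [hx_eq, hCdef]
      simp only [Matrix.conjTranspose_mul, Matrix.conjTranspose_conjTranspose,
        Matrix.star_eq_conjTranspose, Matrix.mul_assoc]
    have h3 : (bᴴ * x * b).trace = (Cᴴ * Dx * C).trace := by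
      rw [← h2x, Matrix.trace_mul_cycle Uᴴ (bᴴ * x * b) U, hUU', Matrix.one_mul]
    rw [h3, Matrix.trace]
    rw [Complex.re_sum]
    congr 1; ext i
    exact hentry ξ i
  -- column norm bound
  have hcol : ∀ i, ∑ k, Complex.normSq (C k i) ≤ 1 := by
    intro i
    set u : Fin n → ℂ := fun k => U k i with hudef
    have hCcol : ∀ k, C k i = (Vᴴ *ᵥ (b *ᵥ u)) k := by
      intro k
      rw [hCdef, Matrix.mul_assoc]
      simp [Matrix.mul_apply, Matrix.mulVec, dotProduct, hudef]
    have hVH : (Vᴴ)ᴴ * Vᴴ = 1 := by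
      rw [Matrix.conjTranspose_conjTranspose]; exact hVV'
    have e1 : ∑ k, Complex.normSq (C k i) = ∑ k, Complex.normSq ((b *ᵥ u) k) := by
      rw [show (∑ k, Complex.normSq (C k i)) = ∑ k, Complex.normSq ((Vᴴ *ᵥ (b *ᵥ u)) k) by
        congr 1; ext k; rw [hCcol k]]
      exact unitary_mulVec_normSq hVH (b *ᵥ u)
    have e2 : ∑ k, Complex.normSq (u k) = 1 := by
      have h1 : ((Uᴴ * U) i i) = 1 := by rw [hUU, Matrix.one_apply_eq]
      have h2 : (Uᴴ * U) i i = ((∑ k, Complex.normSq (u k) : ℝ) : ℂ) := by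
        rw [Matrix.mul_apply, Complex.ofReal_sum]
        congr 1; ext k
        rw [Matrix.conjTranspose_apply, hudef, Complex.star_def,
          ← Complex.normSq_eq_conj_mul_self]
      rw [h2] at h1
      exact_mod_cast h1
    rw [e1, ← e2]
    exact mulVec_normSq_le b hb u
  -- finish
  rw [hLHS, hRHS]
  apply Finset.sum_le_sum
  intro i _
  have key : (μ i) ^ p ≤ ∑ k, Complex.normSq (C k i) * (ξ k ^ (2 * θ)) ^ p := by
    rw [hμ_eq i]
    have := jensen_aux p hp (fun k => Complex.normSq (C k i)) (fun k => ξ k ^ (2 * θ))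
      (fun k => Complex.normSq_nonneg _) (fun k => Real.rpow_nonneg (hξ k) _) (hcol i)
    calc (∑ k, ξ k ^ (2*θ) * Complex.normSq (C k i)) ^ p
        = (∑ k, Complex.normSq (C k i) * ξ k ^ (2*θ)) ^ p := by
          congr 1; apply Finset.sum_congr rfl; intro k _; ring
      _ ≤ _ := this
  refine key.trans ?_
  apply le_of_eq
  apply Finset.sum_congr rfl
  intro k _
  have hξk : (ξ k ^ (2 * θ)) ^ p = ξ k := by
    rw [← Real.rpow_mul (hξ k)]
    have h1 : (2 * θ) * p = 1 := by rw [hpdef]; field_simp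
    rw [h1, Real.rpow_one]
  rw [hξk]
  ring
end

section
/- Let (Ω, μ) be a measure space and 1 ≤ p, q < ∞. There exists a constant c > 0 depending only on p and q such that for all complex-valued functions f, g ∈ L_p(μ) with ‖f‖_p ≤ 1 and ‖g‖_p ≤ 1, the functions M(f) = f·|f|^{p/q − 1} and M(g) = g·|g|^{p/q − 1} (interpreted as 0 at points where the function vanishes) belong to L_q(μ) and satisfy ‖M(f) − M(g)‖_q ≤ c · ‖f − g‖_p^{min(p/q, 1)}. -/
open MeasureTheory


open Real

-- convex tangent: β ≥ 1
lemma rpow_sub_rpow_le_ge_one {a b β : ℝ} (hb : 0 ≤ b) (hba : b ≤ a) (hβ : 1 ≤ β) :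
    a ^ β - b ^ β ≤ β * a ^ (β - 1) * (a - b) := by
  rcases eq_or_lt_of_le (hb.trans hba) with h | ha
  · have hb0 : b = 0 := le_antisymm (hba.trans h.symm.le) hb
    simp [← h, hb0, Real.zero_rpow (by positivity : β ≠ 0)]
  · have hs : (-1 : ℝ) ≤ (b - a) / a := by
      rw [neg_le, ← neg_div, neg_sub]
      rw [div_le_one ha]
      linarith
    have key := one_add_mul_self_le_rpow_one_add hs hβ
    have h1 : 1 + (b - a) / a = b / a := by field_simp; ring
    rw [h1, Real.div_rpow hb ha.le] at key
    have ha' : (0:ℝ) < a ^ β := Real.rpow_pos_of_pos ha β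
    have h2 : a ^ (β - 1) = a ^ β / a := by
      rw [Real.rpow_sub ha, Real.rpow_one]
    have h3 : (1 + β * ((b - a) / a)) * a ^ β ≤ b ^ β := by
      calc (1 + β * ((b - a) / a)) * a ^ β ≤ (b ^ β / a ^ β) * a ^ β := by
            apply mul_le_mul_of_nonneg_right key ha'.le
        _ = b ^ β := by field_simp
    have h4 : β * ((b - a) / a) * a ^ β = β * a ^ (β - 1) * (b - a) := by
      rw [h2]; field_simp
    nlinarith [h4]

-- concave: 0 ≤ β ≤ 1
lemma mul_rpow_sub_rpow_le_le_one {a b β : ℝ} (hb : 0 ≤ b) (hba : b ≤ a) (hβ0 : 0 ≤ β)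
    (hβ1 : β ≤ 1) : b * (a ^ β - b ^ β) ≤ β * b ^ β * (a - b) := by
  rcases eq_or_lt_of_le hb with h | hb'
  · have hb0 : b = 0 := h.symm
    subst hb0
    rw [zero_mul]
    have := Real.rpow_nonneg (le_refl (0:ℝ)) β
    exact mul_nonneg (mul_nonneg hβ0 this) (by linarith)
  · have hs0 : (0 : ℝ) ≤ (a - b) / b := div_nonneg (by linarith) hb'.le
    have key := rpow_one_add_le_one_add_mul_self (le_trans (by norm_num) hs0) hβ0 hβ1
    have h1 : 1 + (a - b) / b = a / b := by field_simp; ring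
    rw [h1, Real.div_rpow (hb.trans hba) hb'.le] at key
    have hb2 : (0:ℝ) < b ^ β := Real.rpow_pos_of_pos hb' β
    have h3 : a ^ β ≤ (1 + β * ((a - b) / b)) * b ^ β := by
      calc a ^ β = (a ^ β / b ^ β) * b ^ β := by field_simp
        _ ≤ (1 + β * ((a - b) / b)) * b ^ β := mul_le_mul_of_nonneg_right key hb2.le
    have h4 : b * ((1 + β * ((a - b) / b)) * b ^ β - b ^ β) = β * b ^ β * (a - b) := by
      field_simp; ring
    nlinarith

-- combined: β ≥ 0
lemma mul_rpow_sub_rpow_le {a b β : ℝ} (hb : 0 ≤ b) (hba : b ≤ a) (hβ : 0 ≤ β) :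
    b * (a ^ β - b ^ β) ≤ β * a ^ β * (a - b) := by
  rcases le_total β 1 with h1 | h1
  · calc b * (a ^ β - b ^ β) ≤ β * b ^ β * (a - b) :=
        mul_rpow_sub_rpow_le_le_one hb hba hβ h1
      _ ≤ β * a ^ β * (a - b) := by
        have h := Real.rpow_le_rpow hb hba hβ
        have h2 : (0:ℝ) ≤ a - b := by linarith
        exact mul_le_mul_of_nonneg_right (mul_le_mul_of_nonneg_left h hβ) h2
  · rcases eq_or_lt_of_le (hb.trans hba) with h | ha
    · have ha0 : a = 0 := h.symm
      subst ha0
      have hb0 : b = 0 := le_antisymm hba hb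
      subst hb0
      simp
    · calc b * (a ^ β - b ^ β)
          ≤ b * (β * a ^ (β - 1) * (a - b)) :=
            mul_le_mul_of_nonneg_left (rpow_sub_rpow_le_ge_one hb hba h1) hb
        _ ≤ a * (β * a ^ (β - 1) * (a - b)) := by
          have h2 : (0:ℝ) ≤ a - b := by linarith
          have h3 : (0:ℝ) ≤ a ^ (β - 1) := Real.rpow_nonneg ha.le _
          have hβ1 : (0:ℝ) ≤ β := hβ
          exact mul_le_mul_of_nonneg_right hba (mul_nonneg (mul_nonneg hβ h3) h2)
        _ = β * a ^ β * (a - b) := by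
          rw [Real.rpow_sub ha, Real.rpow_one]
          field_simp

-- negative exponent mean value: -1 ≤ γ ≤ 0, 0 < b ≤ a
lemma rpow_sub_rpow_le_neg {a b γ : ℝ} (hb : 0 < b) (hba : b ≤ a) (hγ0 : -1 ≤ γ) (hγ1 : γ ≤ 0) :
    b ^ γ - a ^ γ ≤ (-γ) * b ^ (γ - 1) * (a - b) := by
  set c : ℝ := -γ with hc
  have hc0 : 0 ≤ c := by linarith
  have hc1 : c ≤ 1 := by linarith
  have ha : 0 < a := lt_of_lt_of_le hb hba
  have hA : (0:ℝ) < a ^ c := Real.rpow_pos_of_pos ha c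
  have hB : (0:ℝ) < b ^ c := Real.rpow_pos_of_pos hb c
  have hBA : b ^ c ≤ a ^ c := Real.rpow_le_rpow hb.le hba hc0
  have h2 : b * (a ^ c - b ^ c) ≤ c * b ^ c * (a - b) :=
    mul_rpow_sub_rpow_le_le_one hb.le hba hc0 hc1
  have key : (a ^ c - b ^ c) * (b * b ^ c) ≤ (c * (a - b)) * (a ^ c * b ^ c) := by
    have h3 : (a ^ c - b ^ c) * (b * b ^ c) ≤ (c * b ^ c * (a - b)) * b ^ c := by
      nlinarith
    have h4 : (c * b ^ c * (a - b)) * b ^ c ≤ (c * (a - b)) * (a ^ c * b ^ c) := by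
      nlinarith [mul_nonneg (mul_nonneg hc0 (by linarith : (0:ℝ) ≤ a - b)) hB.le]
    linarith
  have e1 : b ^ γ - a ^ γ = (a ^ c - b ^ c) / (a ^ c * b ^ c) := by
    rw [hc, Real.rpow_neg hb.le, Real.rpow_neg ha.le]
    field_simp
  have e2 : (-γ) * b ^ (γ - 1) * (a - b) = (c * (a - b)) / (b * b ^ c) := by
    rw [show γ - 1 = -(c + 1) by rw [hc]; ring, Real.rpow_neg hb.le,
      Real.rpow_add hb, Real.rpow_one]
    field_simp
    ring
  rw [e1, e2, div_le_div_iff₀ (by positivity) (by positivity)]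
  exact key.trans (le_of_eq (by ring))

lemma norm_mazur {α : ℝ} (hα : 0 < α) (z : ℂ) :
    ‖z * ((‖z‖ ^ (α - 1) : ℝ) : ℂ)‖ = ‖z‖ ^ α := by
  rcases eq_or_ne z 0 with rfl | hz
  · simp [Real.zero_rpow hα.ne']
  · have hz' : 0 < ‖z‖ := norm_pos_iff.mpr hz
    rw [norm_mul, Complex.norm_real, Real.norm_eq_abs,
      abs_of_nonneg (Real.rpow_nonneg hz'.le _)]
    have h := Real.rpow_add hz' 1 (α - 1)
    rw [show (1:ℝ) + (α - 1) = α by ring, Real.rpow_one] at h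
    rw [h]

lemma mazur_decomp (α : ℝ) (z w : ℂ) :
    ‖z * ((‖z‖ ^ (α - 1) : ℝ) : ℂ) - w * ((‖w‖ ^ (α - 1) : ℝ) : ℂ)‖ ≤
      ‖z - w‖ * ‖z‖ ^ (α - 1) + ‖w‖ * |‖z‖ ^ (α - 1) - ‖w‖ ^ (α - 1)| := by
  have hza : ‖z‖ = ‖z‖ := rfl
  have hwa : ‖w‖ = ‖w‖ := rfl
  rw [hza, hwa]
  set c1 : ℝ := ‖z‖ ^ (α - 1) with hc1
  set c2 : ℝ := ‖w‖ ^ (α - 1) with hc2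
  have key : z * (c1 : ℂ) - w * (c2 : ℂ) = (z - w) * (c1 : ℂ) + w * (((c1 - c2 : ℝ)) : ℂ) := by
    push_cast
    ring
  rw [key]
  calc ‖(z - w) * (c1 : ℂ) + w * (((c1 - c2 : ℝ)) : ℂ)‖
      ≤ ‖(z - w) * (c1 : ℂ)‖ + ‖w * (((c1 - c2 : ℝ)) : ℂ)‖ := norm_add_le _ _
    _ = ‖z - w‖ * c1 + ‖w‖ * |c1 - c2| := by
        rw [norm_mul, norm_mul, Complex.norm_real, Complex.norm_real, Real.norm_eq_abs,
          Real.norm_eq_abs, abs_of_nonneg (Real.rpow_nonneg (norm_nonneg z) _)]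

lemma mazur_pointwise_le_one_aux {α : ℝ} (hα0 : 0 < α) (hα1 : α ≤ 1) {z w : ℂ}
    (hw : ‖w‖ ≤ ‖z‖) :
    ‖z * ((‖z‖ ^ (α - 1) : ℝ) : ℂ) - w * ((‖w‖ ^ (α - 1) : ℝ) : ℂ)‖ ≤
      3 * ‖z - w‖ ^ α := by
  rcases eq_or_ne z w with rfl | hzw
  · simp [Real.zero_rpow hα0.ne']
  have hd : 0 < ‖z - w‖ := by rwa [norm_pos_iff, sub_ne_zero]
  set d : ℝ := ‖z - w‖ with hdd
  have hdα : 0 ≤ d ^ α := Real.rpow_nonneg hd.le _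
  rcases le_or_gt ‖w‖ d with h1 | h1
  · -- ‖w‖ ≤ d
    have hz2 : ‖z‖ ≤ 2 * d := by
      have := norm_sub_norm_le z w
      linarith
    have hza : ‖z‖ ^ α ≤ 2 * d ^ α := by
      calc ‖z‖ ^ α ≤ (2 * d) ^ α := Real.rpow_le_rpow (norm_nonneg _) hz2 hα0.le
        _ = 2 ^ α * d ^ α := Real.mul_rpow (by norm_num) hd.le
        _ ≤ 2 * d ^ α := by
            have h2 : (2:ℝ) ^ α ≤ 2 ^ (1:ℝ) :=
              Real.rpow_le_rpow_of_exponent_le one_le_two hα1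
            rw [Real.rpow_one] at h2
            nlinarith
    have hwa : ‖w‖ ^ α ≤ d ^ α := Real.rpow_le_rpow (norm_nonneg _) h1 hα0.le
    calc ‖z * ((‖z‖ ^ (α - 1) : ℝ) : ℂ) - w * ((‖w‖ ^ (α - 1) : ℝ) : ℂ)‖
        ≤ ‖z * ((‖z‖ ^ (α - 1) : ℝ) : ℂ)‖ +
          ‖w * ((‖w‖ ^ (α - 1) : ℝ) : ℂ)‖ := norm_sub_le _ _
      _ = ‖z‖ ^ α + ‖w‖ ^ α := by rw [norm_mazur hα0, norm_mazur hα0]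
      _ ≤ 3 * d ^ α := by linarith
  · -- d < ‖w‖ ≤ ‖z‖
    have hb : 0 < ‖w‖ := hd.trans h1
    have hz : 0 < ‖z‖ := lt_of_lt_of_le hb hw
    set γ : ℝ := α - 1 with hγ
    have hγ1 : γ ≤ 0 := by simp [hγ]; linarith
    have hγ0 : -1 ≤ γ := by simp [hγ]; linarith
    have habs : |‖z‖ ^ γ - ‖w‖ ^ γ| = ‖w‖ ^ γ - ‖z‖ ^ γ := by
      rw [abs_of_nonpos (by
        have := Real.rpow_le_rpow_of_nonpos hb hw hγ1
        linarith), neg_sub]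
    have hdz : d ≤ ‖z‖ := le_trans h1.le hw
    have term1 : d * ‖z‖ ^ γ ≤ d ^ α := by
      have h2 : ‖z‖ ^ γ ≤ d ^ γ := Real.rpow_le_rpow_of_nonpos hd hdz hγ1
      have h3 : d * d ^ γ = d ^ α := by
        have h := Real.rpow_add hd 1 γ
        rw [show (1:ℝ) + γ = α by rw [hγ]; ring, Real.rpow_one] at h
        exact h.symm
      nlinarith
    have term2 : ‖w‖ * (‖w‖ ^ γ - ‖z‖ ^ γ) ≤ d ^ α := by
      have h2 := rpow_sub_rpow_le_neg hb hw hγ0 hγ1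
      have h3 : ‖w‖ * ((-γ) * ‖w‖ ^ (γ - 1) * (‖z‖ - ‖w‖)) =
          (-γ) * ‖w‖ ^ γ * (‖z‖ - ‖w‖) := by
        have h := Real.rpow_add hb 1 (γ - 1)
        rw [show (1:ℝ) + (γ - 1) = γ by ring, Real.rpow_one] at h
        rw [h]; ring
    -- ‖w‖ * (‖w‖^γ - ‖z‖^γ) ≤ ‖w‖ * ((-γ) * ‖w‖^(γ-1) * (‖z‖-‖w‖)) = (-γ)‖w‖^γ (‖z‖-‖w‖)
      have h4 : ‖w‖ * (‖w‖ ^ γ - ‖z‖ ^ γ) ≤ (-γ) * ‖w‖ ^ γ * (‖z‖ - ‖w‖) := by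
        rw [← h3]
        exact mul_le_mul_of_nonneg_left h2 hb.le
      have h5 : ‖w‖ ^ γ ≤ d ^ γ := Real.rpow_le_rpow_of_nonpos hd h1.le hγ1
      have h6 : ‖z‖ - ‖w‖ ≤ d := by
        have := norm_sub_norm_le z w
        linarith
      have h7 : -γ ≤ 1 := by rw [hγ]; linarith
      have h8 : (0:ℝ) ≤ -γ := by linarith
      have h9 : (0:ℝ) ≤ ‖z‖ - ‖w‖ := by linarith
      have h10 : d * d ^ γ = d ^ α := by
        have h := Real.rpow_add hd 1 γ
        rw [show (1:ℝ) + γ = α by rw [hγ]; ring, Real.rpow_one] at h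
        exact h.symm
      have hwγ : (0:ℝ) ≤ ‖w‖ ^ γ := Real.rpow_nonneg hb.le _
      have hdγ : (0:ℝ) ≤ d ^ γ := Real.rpow_nonneg hd.le _
      have s2 : ‖w‖ ^ γ * (‖z‖ - ‖w‖) ≤ d ^ γ * d := mul_le_mul h5 h6 h9 hdγ
      have s1 : (-γ) * (‖w‖ ^ γ * (‖z‖ - ‖w‖)) ≤ 1 * (‖w‖ ^ γ * (‖z‖ - ‖w‖)) :=
        mul_le_mul_of_nonneg_right h7 (mul_nonneg hwγ h9)
      have h12 : d ^ γ * d = d ^ α := by rw [mul_comm]; exact h10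
      nlinarith
    calc ‖z * ((‖z‖ ^ (α - 1) : ℝ) : ℂ) - w * ((‖w‖ ^ (α - 1) : ℝ) : ℂ)‖
        ≤ d * ‖z‖ ^ γ + ‖w‖ * |‖z‖ ^ γ - ‖w‖ ^ γ| := mazur_decomp α z w
      _ = d * ‖z‖ ^ γ + ‖w‖ * (‖w‖ ^ γ - ‖z‖ ^ γ) := by rw [habs]
      _ ≤ d ^ α + d ^ α := add_le_add term1 term2
      _ ≤ 3 * d ^ α := by linarith

lemma mazur_pointwise_le_one {α : ℝ} (hα0 : 0 < α) (hα1 : α ≤ 1) (z w : ℂ) :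
    ‖z * ((‖z‖ ^ (α - 1) : ℝ) : ℂ) - w * ((‖w‖ ^ (α - 1) : ℝ) : ℂ)‖ ≤
      3 * ‖z - w‖ ^ α := by
  rcases le_total ‖w‖ ‖z‖ with h | h
  · exact mazur_pointwise_le_one_aux hα0 hα1 h
  · rw [norm_sub_rev, norm_sub_rev z w]
    exact mazur_pointwise_le_one_aux hα0 hα1 h

lemma mazur_pointwise_ge_one_aux {α : ℝ} (hα : 1 ≤ α) {z w : ℂ} (hw : ‖w‖ ≤ ‖z‖) :
    ‖z * ((‖z‖ ^ (α - 1) : ℝ) : ℂ) - w * ((‖w‖ ^ (α - 1) : ℝ) : ℂ)‖ ≤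
      α * ((‖z‖ + ‖w‖) ^ (α - 1) * ‖z - w‖) := by
  set β : ℝ := α - 1 with hβ
  have hβ0 : 0 ≤ β := by rw [hβ]; linarith
  set d : ℝ := ‖z - w‖ with hdd
  have hd0 : 0 ≤ d := norm_nonneg _
  have habs : |‖z‖ ^ β - ‖w‖ ^ β| = ‖z‖ ^ β - ‖w‖ ^ β := by
    rw [abs_of_nonneg]
    have := Real.rpow_le_rpow (norm_nonneg w) hw hβ0
    linarith
  have h6 : ‖z‖ - ‖w‖ ≤ d := by
    have := norm_sub_norm_le z w
    linarith
  have term2 : ‖w‖ * (‖z‖ ^ β - ‖w‖ ^ β) ≤ β * ‖z‖ ^ β * d := by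
    have h2 := mul_rpow_sub_rpow_le (norm_nonneg w) hw hβ0
    have h3 : β * ‖z‖ ^ β * (‖z‖ - ‖w‖) ≤ β * ‖z‖ ^ β * d := by
      have : (0:ℝ) ≤ β * ‖z‖ ^ β := mul_nonneg hβ0 (Real.rpow_nonneg (norm_nonneg _) _)
      nlinarith
    linarith
  have hmono : ‖z‖ ^ β ≤ (‖z‖ + ‖w‖) ^ β :=
    Real.rpow_le_rpow (norm_nonneg _) (by linarith [norm_nonneg w]) hβ0
  have hS : (0:ℝ) ≤ (‖z‖ + ‖w‖) ^ β := Real.rpow_nonneg (by positivity) _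
  calc ‖z * ((‖z‖ ^ (α - 1) : ℝ) : ℂ) - w * ((‖w‖ ^ (α - 1) : ℝ) : ℂ)‖
      ≤ d * ‖z‖ ^ β + ‖w‖ * |‖z‖ ^ β - ‖w‖ ^ β| := mazur_decomp α z w
    _ = d * ‖z‖ ^ β + ‖w‖ * (‖z‖ ^ β - ‖w‖ ^ β) := by rw [habs]
    _ ≤ d * ‖z‖ ^ β + β * ‖z‖ ^ β * d := by linarith
    _ = (1 + β) * ‖z‖ ^ β * d := by ring
    _ ≤ (1 + β) * (‖z‖ + ‖w‖) ^ β * d :=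
        mul_le_mul_of_nonneg_right (mul_le_mul_of_nonneg_left hmono (by linarith)) hd0
    _ = α * ((‖z‖ + ‖w‖) ^ β * d) := by rw [hβ]; ring

lemma mazur_pointwise_ge_one {α : ℝ} (hα : 1 ≤ α) (z w : ℂ) :
    ‖z * ((‖z‖ ^ (α - 1) : ℝ) : ℂ) - w * ((‖w‖ ^ (α - 1) : ℝ) : ℂ)‖ ≤
      α * ((‖z‖ + ‖w‖) ^ (α - 1) * ‖z - w‖) := by
  rcases le_total ‖w‖ ‖z‖ with h | h
  · exact mazur_pointwise_ge_one_aux hα h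
  · rw [norm_sub_rev, norm_sub_rev z w]
    calc ‖w * ((‖w‖ ^ (α - 1) : ℝ) : ℂ) - z * ((‖z‖ ^ (α - 1) : ℝ) : ℂ)‖
        ≤ α * ((‖w‖ + ‖z‖) ^ (α - 1) * ‖w - z‖) := mazur_pointwise_ge_one_aux hα h
      _ = α * ((‖z‖ + ‖w‖) ^ (α - 1) * ‖w - z‖) := by rw [add_comm]

open scoped ENNReal NNReal

open MeasureTheory in
lemma mazur_aesm {Ω : Type*} [MeasurableSpace Ω] {μ : Measure Ω} {α : ℝ} {f : Ω → ℂ}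
    (hf : AEStronglyMeasurable f μ) :
    AEStronglyMeasurable (fun ω => f ω * ((‖f ω‖ ^ (α - 1) : ℝ) : ℂ)) μ := by
  have hg : Measurable (fun z : ℂ => z * ((‖z‖ ^ (α - 1) : ℝ) : ℂ)) :=
    measurable_id.mul
      (Complex.measurable_ofReal.comp ((continuous_norm.measurable).pow measurable_const))
  exact (hg.comp_aemeasurable hf.aemeasurable).aestronglyMeasurable

open MeasureTheory in
lemma mazur_eLpNorm {Ω : Type*} [MeasurableSpace Ω] {μ : Measure Ω} {α : ℝ} (hα : 0 < α)
    (f : Ω → ℂ) (Q : ℝ≥0∞) :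
    eLpNorm (fun ω => f ω * ((‖f ω‖ ^ (α - 1) : ℝ) : ℂ)) Q μ =
      eLpNorm f (Q * ENNReal.ofReal α) μ ^ α := by
  rw [← eLpNorm_norm_rpow f hα]
  apply eLpNorm_congr_norm_ae
  filter_upwards with ω
  rw [norm_mazur hα, Real.norm_eq_abs, abs_of_nonneg (Real.rpow_nonneg (norm_nonneg _) _)]

lemma ennreal_toReal_conv {X Y : ℝ≥0∞} {c e : ℝ} (hc : 0 ≤ c) (he : 0 ≤ e) (hY : Y ≠ ∞)
    (h : X ≤ ENNReal.ofReal c * Y ^ e) : X.toReal ≤ c * Y.toReal ^ e := by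
  have hR : ENNReal.ofReal c * Y ^ e ≠ ∞ :=
    ENNReal.mul_ne_top ENNReal.ofReal_ne_top (ENNReal.rpow_lt_top_of_nonneg he hY).ne
  have h2 := ENNReal.toReal_mono hR h
  rwa [ENNReal.toReal_mul, ENNReal.toReal_ofReal hc, ← ENNReal.toReal_rpow] at h2



theorem mazur_holder_commutative {Ω : Type*} [MeasurableSpace Ω] (μ : Measure Ω)
    (p q : ℝ) (hp : 1 ≤ p) (hq : 1 ≤ q) :
    ∃ c > (0 : ℝ), ∀ f g : Ω → ℂ,
      MemLp f (ENNReal.ofReal p) μ → MemLp g (ENNReal.ofReal p) μ →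
      eLpNorm f (ENNReal.ofReal p) μ ≤ 1 → eLpNorm g (ENNReal.ofReal p) μ ≤ 1 →
      MemLp (fun ω => f ω * ((‖f ω‖ ^ (p / q - 1) : ℝ) : ℂ))
        (ENNReal.ofReal q) μ ∧
      MemLp (fun ω => g ω * ((‖g ω‖ ^ (p / q - 1) : ℝ) : ℂ))
        (ENNReal.ofReal q) μ ∧
      (eLpNorm ((fun ω => f ω * ((‖f ω‖ ^ (p / q - 1) : ℝ) : ℂ)) -
          (fun ω => g ω * ((‖g ω‖ ^ (p / q - 1) : ℝ) : ℂ)))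
        (ENNReal.ofReal q) μ).toReal ≤
        c * (eLpNorm (f - g) (ENNReal.ofReal p) μ).toReal ^ min (p / q) 1 := by
  have hq0 : 0 < q := lt_of_lt_of_le one_pos hq
  have hp0 : 0 < p := lt_of_lt_of_le one_pos hp
  set α : ℝ := p / q with hαdef
  have hα : 0 < α := div_pos hp0 hq0
  set P := ENNReal.ofReal p with hPdef
  set Q := ENNReal.ofReal q with hQdef
  have hQP : Q * ENNReal.ofReal α = P := by
    rw [hQdef, hPdef, ← ENNReal.ofReal_mul hq0.le]
    congr 1
    rw [hαdef, mul_comm, div_mul_cancel₀ p hq0.ne']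
  have hmem : ∀ f : Ω → ℂ, MemLp f P μ →
      MemLp (fun ω => f ω * ((‖f ω‖ ^ (α - 1) : ℝ) : ℂ)) Q μ := by
    intro f hf
    refine ⟨mazur_aesm hf.1, ?_⟩
    rw [mazur_eLpNorm hα f Q, hQP]
    exact ENNReal.rpow_lt_top_of_nonneg hα.le hf.2.ne
  rcases le_or_gt p q with hpq | hpq
  · -- case α ≤ 1
    have hα1 : α ≤ 1 := (div_le_one hq0).mpr hpq
    refine ⟨3, by norm_num, fun f g hf hg hf1 hg1 => ⟨hmem f hf, hmem g hg, ?_⟩⟩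
    have hmin : min α 1 = α := min_eq_left hα1
    rw [hmin]
    have hfg : eLpNorm (f - g) P μ ≠ ∞ := (hf.sub hg).2.ne
    apply ennreal_toReal_conv (by norm_num) hα.le hfg
    calc eLpNorm ((fun ω => f ω * ((‖f ω‖ ^ (α - 1) : ℝ) : ℂ)) -
          (fun ω => g ω * ((‖g ω‖ ^ (α - 1) : ℝ) : ℂ))) Q μ
        ≤ eLpNorm (fun ω => 3 * ‖(f - g) ω‖ ^ α) Q μ := by
          apply eLpNorm_mono_real
          intro ω
          simp only [Pi.sub_apply]
          exact mazur_pointwise_le_one hα hα1 (f ω) (g ω)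
      _ = ‖(3:ℝ)‖ₑ * eLpNorm (fun ω => ‖(f - g) ω‖ ^ α) Q μ := by
          rw [← eLpNorm_const_smul (3:ℝ) (fun ω => ‖(f - g) ω‖ ^ α) Q μ]
          rfl
      _ = ‖(3:ℝ)‖ₑ * (eLpNorm (f - g) (Q * ENNReal.ofReal α) μ ^ α) := by
          rw [eLpNorm_norm_rpow _ hα]
      _ = ENNReal.ofReal 3 * eLpNorm (f - g) P μ ^ α := by
          rw [hQP, Real.enorm_eq_ofReal (by norm_num)]
  · -- case 1 < α
    have hα1 : 1 < α := (one_lt_div hq0).mpr hpq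
    have hβ0 : 0 ≤ α - 1 := by linarith
    have hβ0' : 0 < α - 1 := by linarith
    set r : ℝ := p * q / (p - q) with hrdef
    have hr0 : 0 < r := by
      apply div_pos (by positivity)
      linarith
    set R := ENNReal.ofReal r with hRdef
    have hpqr : 1 / Q = 1 / R + 1 / P := by
      rw [hQdef, hRdef, hPdef, one_div, one_div, one_div,
        ← ENNReal.ofReal_inv_of_pos hq0, ← ENNReal.ofReal_inv_of_pos hr0,
        ← ENNReal.ofReal_inv_of_pos hp0,
        ← ENNReal.ofReal_add (by positivity) (by positivity)]
      congr 1
      rw [hrdef]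
      field_simp
      ring
    have hRP : R * ENNReal.ofReal (α - 1) = P := by
      rw [hRdef, hPdef, ← ENNReal.ofReal_mul hr0.le]
      congr 1
      rw [hrdef, hαdef]
      have h1 : p - q ≠ 0 := by linarith
      field_simp
    have hP1 : (1:ℝ≥0∞) ≤ P := by
      rw [hPdef]
      exact ENNReal.one_le_ofReal.mpr hp
    refine ⟨α * 2 ^ (α - 1), by positivity, fun f g hf hg hf1 hg1 =>
      ⟨hmem f hf, hmem g hg, ?_⟩⟩
    have hmin : min α 1 = 1 := min_eq_right hα1.le
    rw [hmin]
    have hfg : eLpNorm (f - g) P μ ≠ ∞ := (hf.sub hg).2.ne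
    apply ennreal_toReal_conv (by positivity) zero_le_one hfg
    rw [ENNReal.rpow_one]
    set F : Ω → ℝ := fun ω => ‖f ω - g ω‖ with hF
    set K : Ω → ℝ := fun ω => (‖f ω‖ + ‖g ω‖) ^ (α - 1) with hK
    have hFm : AEStronglyMeasurable F μ := (hf.1.sub hg.1).norm
    have hKm : AEStronglyMeasurable K μ :=
      (((hf.1.norm.add hg.1.norm).aemeasurable.pow aemeasurable_const)).aestronglyMeasurable
    have hKR : eLpNorm K R μ ≤ ENNReal.ofReal (2 ^ (α - 1)) := by
      have hKeq : K = fun ω => ‖‖f ω‖ + ‖g ω‖‖ ^ (α - 1) := by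
        funext ω
        rw [Real.norm_of_nonneg (by positivity)]
      have hS2 : eLpNorm (fun ω => ‖f ω‖ + ‖g ω‖) P μ ≤ 2 := by
        calc eLpNorm (fun ω => ‖f ω‖ + ‖g ω‖) P μ
            ≤ eLpNorm (fun ω => ‖f ω‖) P μ + eLpNorm (fun ω => ‖g ω‖) P μ :=
              eLpNorm_add_le hf.1.norm hg.1.norm hP1
          _ = eLpNorm f P μ + eLpNorm g P μ := by rw [eLpNorm_norm, eLpNorm_norm]
          _ ≤ 1 + 1 := add_le_add hf1 hg1
          _ = 2 := by norm_num
      calc eLpNorm K R μ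
          = eLpNorm (fun ω => ‖f ω‖ + ‖g ω‖) (R * ENNReal.ofReal (α - 1)) μ ^ (α - 1) := by
            rw [hKeq, eLpNorm_norm_rpow _ hβ0']
        _ = eLpNorm (fun ω => ‖f ω‖ + ‖g ω‖) P μ ^ (α - 1) := by rw [hRP]
        _ ≤ (2:ℝ≥0∞) ^ (α - 1) := ENNReal.rpow_le_rpow hS2 hβ0
        _ = ENNReal.ofReal (2 ^ (α - 1)) := by
            rw [show ((2:ℝ≥0∞)) = ENNReal.ofReal (2:ℝ) by norm_num,
              ENNReal.ofReal_rpow_of_pos two_pos]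
    calc eLpNorm ((fun ω => f ω * ((‖f ω‖ ^ (α - 1) : ℝ) : ℂ)) -
          (fun ω => g ω * ((‖g ω‖ ^ (α - 1) : ℝ) : ℂ))) Q μ
        ≤ eLpNorm (fun ω => α * (K ω * F ω)) Q μ := by
          apply eLpNorm_mono_real
          intro ω
          simp only [Pi.sub_apply]
          exact mazur_pointwise_ge_one hα1.le (f ω) (g ω)
      _ = ‖α‖ₑ * eLpNorm (K • F) Q μ := by
          rw [← eLpNorm_const_smul α (K • F) Q μ]
          congr 1
      _ ≤ ‖α‖ₑ * (eLpNorm K R μ * eLpNorm F P μ) := by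
          exact mul_le_mul_right (eLpNorm_smul_le_mul_eLpNorm hFm hKm (hpqr := ⟨by simpa only [one_div] using hpqr.symm⟩)) _
      _ = ENNReal.ofReal α * (eLpNorm K R μ * eLpNorm (f - g) P μ) := by
          rw [Real.enorm_eq_ofReal hα.le]
          congr 2
          exact eLpNorm_norm (f - g)
      _ ≤ ENNReal.ofReal α * (ENNReal.ofReal (2 ^ (α - 1)) * eLpNorm (f - g) P μ) := by
          gcongr
      _ = ENNReal.ofReal (α * 2 ^ (α - 1)) * eLpNorm (f - g) P μ := by
          rw [ENNReal.ofReal_mul hα.le, mul_assoc]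
end
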